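/- Let G = ([n], E) be a connected finite simple graph and k a field. Then in k[x_1,…,x_n] the ideal of acyclic orientations satisfies A_G = ⋂_{σ} ⟨ x_i^{din_σ(i)+1} : i ∈ σ ⟩, where the intersection runs over all nonempty subsets σ ⊆ [n] such that the induced subgraph G[σ] is connected, and din_σ(i) = |{ j ∈ σ : {i,j} ∈ E }| for i ∈ σ. -/

import Mathlib

open MvPolynomial

/-- `O` is an orientation of `G`. -/
def IsOrientation {V : Type*} (G : SimpleGraph V) (O : V → V → Prop) : Prop :=
  (∀ u v, O u v → G.Adj u v) ∧ ∀ u v, G.Adj u v → (O u v ↔ ¬ O v u)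

/-- The relation `O` has no directed cycles. -/
def IsAcyclicRel {V : Type*} (O : V → V → Prop) : Prop :=
  ∀ v, ¬ Relation.TransGen O v v

/-- In-degree of a vertex with respect to an orientation. -/
noncomputable def inDeg {V : Type*} (O : V → V → Prop) (i : V) : ℕ :=
  {j : V | O j i}.ncard

/-- The ideal of acyclic orientations of `G`, generated by the monomials
`∏ i, x_i ^ (indeg_O(i) + 1)` over acyclic orientations `O` of `G`. -/
noncomputable def acyclicIdeal (n : ℕ) (G : SimpleGraph (Fin n)) (K : Type*) [Field K] :
    Ideal (MvPolynomial (Fin n) K) :=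
  Ideal.span {f | ∃ O : Fin n → Fin n → Prop, IsOrientation G O ∧ IsAcyclicRel O ∧
    f = ∏ i, (X i : MvPolynomial (Fin n) K) ^ (inDeg O i + 1)}

/-- `A_G` is the intersection of the irreducible ideals
`⟨x_i ^ (din_σ(i)+1) : i ∈ σ⟩` over nonempty `σ` with `G[σ]` connected. -/

lemma peel {n : ℕ} (G : SimpleGraph (Fin n)) (a : Fin n → ℕ)
    (H : ∀ σ : Finset (Fin n), σ.Nonempty → (G.induce (↑σ : Set (Fin n))).Connected →
      ∃ i ∈ σ, {j : Fin n | j ∈ σ ∧ G.Adj i j}.ncard < a i) :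
    ∀ S : Finset (Fin n), ∃ f : Fin n → ℕ, Set.InjOn f ↑S ∧
      ∀ i ∈ S, {j : Fin n | j ∈ S ∧ G.Adj i j ∧ f i < f j}.ncard < a i := by
  intro S
  induction S using Finset.strongInduction with
  | _ S ih =>
    rcases S.eq_empty_or_nonempty with rfl | ⟨v, hv⟩
    · exact ⟨fun _ => 0, by simp, by simp⟩
    classical
    set R : Fin n → Fin n → Prop :=
      Relation.ReflTransGen (fun u w => (G.Adj u w ∧ u ∈ S) ∧ w ∈ S) with hR
    set σ : Finset (Fin n) := S.filter (fun j => R v j) with hσ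
    have hvσ : v ∈ σ := by simp [hσ, hv, hR, Relation.ReflTransGen.refl]
    have hσS : σ ⊆ S := Finset.filter_subset _ _
    have hclosed : ∀ j ∈ σ, ∀ l ∈ S, G.Adj j l → l ∈ σ := by
      intro j hj l hl hadj
      simp only [hσ, Finset.mem_filter] at hj ⊢
      exact ⟨hl, hj.2.tail ⟨⟨hadj, hj.1⟩, hl⟩⟩
    -- connectivity of G[σ]
    have hvσ' : v ∈ (↑σ : Set (Fin n)) := hvσ
    have reach : ∀ j, R v j → j ∈ S →
        ∀ (hj : j ∈ (↑σ : Set (Fin n))),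
          (G.induce (↑σ : Set (Fin n))).Reachable ⟨v, hvσ'⟩ ⟨j, hj⟩ := by
      intro j hRj
      induction hRj with
      | refl => intro _ _; rfl
      | @tail b c hb hbc ih2 =>
        intro _ hjc
        have hbσ : b ∈ (↑σ : Set (Fin n)) := by
          simp only [hσ, Finset.coe_filter, Set.mem_setOf_eq]
          exact ⟨hbc.1.2, hb⟩
        refine (ih2 hbc.1.2 hbσ).trans (SimpleGraph.Adj.reachable ?_)
        simpa using hbc.1.1
    have hconn : (G.induce (↑σ : Set (Fin n))).Connected := by
      haveI : Nonempty (↑σ : Set (Fin n)) := ⟨⟨v, hvσ'⟩⟩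
      refine ⟨fun x y => ?_⟩
      obtain ⟨u, hu⟩ := x
      obtain ⟨w, hw⟩ := y
      have hu' : u ∈ S ∧ R v u := by simpa [hσ] using hu
      have hw' : w ∈ S ∧ R v w := by simpa [hσ] using hw
      exact (reach u hu'.2 hu'.1 hu).symm.trans (reach w hw'.2 hw'.1 hw)
    obtain ⟨i0, hi0σ, hdi0⟩ := H σ ⟨v, hvσ⟩ hconn
    have hi0S : i0 ∈ S := hσS hi0σ
    have hsets : {j : Fin n | j ∈ S ∧ G.Adj i0 j} = {j : Fin n | j ∈ σ ∧ G.Adj i0 j} := by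
      ext j
      simp only [Set.mem_setOf_eq]
      exact ⟨fun ⟨h1, h2⟩ => ⟨hclosed i0 hi0σ j h1 h2, h2⟩, fun ⟨h1, h2⟩ => ⟨hσS h1, h2⟩⟩
    obtain ⟨f', hinj', hcnt'⟩ := ih (S.erase i0) (Finset.erase_ssubset hi0S)
    refine ⟨fun j => if j = i0 then 0 else f' j + 1, ?_, ?_⟩
    · intro x hx y hy hxy
      by_cases hxi : x = i0 <;> by_cases hyi : y = i0 <;>
        simp only [hxi, hyi, if_pos, if_neg, ite_true, ite_false] at hxy ⊢
      · omega
      · omega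
      · exact hinj' (by simpa [Finset.mem_erase, hxi] using hx)
          (by simpa [Finset.mem_erase, hyi] using hy) (by omega)
    · intro i hiS
      by_cases hi : i = i0
      · subst hi
        calc {j : Fin n | j ∈ S ∧ G.Adj i j ∧ _ < _}.ncard
            ≤ {j : Fin n | j ∈ S ∧ G.Adj i j}.ncard := by
              exact Set.ncard_le_ncard (fun j hj => ⟨hj.1, hj.2.1⟩) (Set.toFinite _)
          _ < a i := by rw [hsets]; exact hdi0
      · have heq : {j : Fin n | j ∈ S ∧ G.Adj i j ∧
            (if i = i0 then 0 else f' i + 1) < (if j = i0 then 0 else f' j + 1)} =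
            {j : Fin n | j ∈ S.erase i0 ∧ G.Adj i j ∧ f' i < f' j} := by
          ext j
          simp only [Set.mem_setOf_eq, Finset.mem_erase, if_neg hi]
          by_cases hj : j = i0
          · subst hj; simp
          · simp only [if_neg hj]
            constructor
            · rintro ⟨h1, h2, h3⟩; exact ⟨⟨hj, h1⟩, h2, by omega⟩
            · rintro ⟨⟨_, h1⟩, h2, h3⟩; exact ⟨h1, h2, by omega⟩
        rw [heq]
        exact hcnt' i (Finset.mem_erase.mpr ⟨hi, hiS⟩)

lemma core {n : ℕ} (G : SimpleGraph (Fin n)) (a : Fin n → ℕ) :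
    (∃ O : Fin n → Fin n → Prop, IsOrientation G O ∧ IsAcyclicRel O ∧
        ∀ i, inDeg O i + 1 ≤ a i) ↔
    (∀ σ : Finset (Fin n), σ.Nonempty → (G.induce (↑σ : Set (Fin n))).Connected →
        ∃ i ∈ σ, {j : Fin n | j ∈ σ ∧ G.Adj i j}.ncard + 1 ≤ a i) := by
  constructor
  · rintro ⟨O, hO, hac, hdeg⟩ σ hne hconn
    set r : Fin n → Fin n → Prop := fun x y => Relation.TransGen O y x with hr
    haveI : IsTrans (Fin n) r := ⟨fun a b c h1 h2 => Relation.TransGen.trans h2 h1⟩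
    haveI : IsIrrefl (Fin n) r := ⟨fun x h => hac x h⟩
    obtain ⟨m, hmσ, hmin⟩ :=
      (Finite.wellFounded_of_trans_of_irrefl r).has_min (↑σ : Set (Fin n))
        ⟨hne.choose, hne.choose_spec⟩
    refine ⟨m, hmσ, le_trans ?_ (hdeg m)⟩
    have hsub : {j : Fin n | j ∈ σ ∧ G.Adj m j} ⊆ {j : Fin n | O j m} := by
      rintro j ⟨hjσ, hadj⟩
      have hnmj : ¬ O m j := fun h => hmin j hjσ (Relation.TransGen.single h)
      have := (hO.2 m j hadj)
      by_contra hc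
      exact hnmj (this.mpr hc)
    have := Set.ncard_le_ncard hsub (Set.toFinite _)
    simpa [inDeg] using Nat.add_le_add_right this 1
  · intro H
    obtain ⟨f, hinj, hcnt⟩ := peel G a
      (fun σ h1 h2 => by
        obtain ⟨i, hi, h⟩ := H σ h1 h2
        exact ⟨i, hi, by omega⟩) Finset.univ
    have hinj' : Function.Injective f := by
      rw [← Set.injOn_univ]; simpa using hinj
    refine ⟨fun u v => G.Adj u v ∧ f v < f u, ⟨fun u v h => h.1, ?_⟩, ?_, ?_⟩
    · intro u v hadj
      have hne : f u ≠ f v := fun h => G.ne_of_adj hadj (hinj' h)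
      constructor
      · rintro ⟨_, h⟩ ⟨_, h2⟩; omega
      · intro h
        refine ⟨hadj, ?_⟩
        have : ¬ f u < f v := fun hh => h ⟨hadj.symm, hh⟩
        omega
    · have mono : ∀ u v, Relation.TransGen (fun u v => G.Adj u v ∧ f v < f u) u v →
          f v < f u := by
        intro u v h
        induction h with
        | single h => exact h.2
        | tail _ h2 ih => exact lt_trans h2.2 ih
      exact fun v h => lt_irrefl _ (mono v v h)
    · intro i
      have heq : {j : Fin n | G.Adj j i ∧ f i < f j} =
          {j : Fin n | j ∈ (Finset.univ : Finset (Fin n)) ∧ G.Adj i j ∧ f i < f j} := by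
        ext j; simp [G.adj_comm]
      have := hcnt i (Finset.mem_univ i)
      rw [← heq] at this
      simpa [inDeg] using this

lemma prodPow {n : ℕ} {K : Type*} [Field K] (c : Fin n → ℕ) :
    ∏ i, (X i : MvPolynomial (Fin n) K) ^ c i =
      monomial (Finsupp.equivFunOnFinite.symm c) (1 : K) := by
  rw [← prod_X_pow_eq_monomial]
  refine (Finset.prod_subset (Finset.subset_univ _) ?_).symm
  intro i _ hi
  have : c i = 0 := by simpa [Finsupp.mem_support_iff] using hi
  show (X i : MvPolynomial (Fin n) K) ^ (Finsupp.equivFunOnFinite.symm c) i = 1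
  simp [show ((Finsupp.equivFunOnFinite.symm c) i) = c i from rfl, this]

lemma mem_acyclic_iff {n : ℕ} (G : SimpleGraph (Fin n)) {K : Type*} [Field K]
    (p : MvPolynomial (Fin n) K) :
    p ∈ acyclicIdeal n G K ↔ ∀ m ∈ p.support, ∃ O : Fin n → Fin n → Prop,
      IsOrientation G O ∧ IsAcyclicRel O ∧ ∀ i, inDeg O i + 1 ≤ m i := by
  have hset : {f | ∃ O : Fin n → Fin n → Prop, IsOrientation G O ∧ IsAcyclicRel O ∧
      f = ∏ i, (X i : MvPolynomial (Fin n) K) ^ (inDeg O i + 1)} =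
      (fun s => monomial s (1 : K)) ''
        {d : Fin n →₀ ℕ | ∃ O : Fin n → Fin n → Prop, IsOrientation G O ∧ IsAcyclicRel O ∧
          d = Finsupp.equivFunOnFinite.symm (fun i => inDeg O i + 1)} := by
    ext f
    constructor
    · rintro ⟨O, h1, h2, rfl⟩
      exact ⟨_, ⟨O, h1, h2, rfl⟩, (prodPow _).symm⟩
    · rintro ⟨d, ⟨O, h1, h2, rfl⟩, rfl⟩
      exact ⟨O, h1, h2, (prodPow _).symm⟩
  rw [acyclicIdeal, hset, mem_ideal_span_monomial_image]
  refine forall₂_congr fun m _ => ?_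
  constructor
  · rintro ⟨si, ⟨O, h1, h2, rfl⟩, hle⟩
    exact ⟨O, h1, h2, fun i => hle i⟩
  · rintro ⟨O, h1, h2, hle⟩
    exact ⟨_, ⟨O, h1, h2, rfl⟩, fun i => hle i⟩

lemma mem_irr_iff {n : ℕ} {K : Type*} [Field K] (σ : Finset (Fin n)) (e : Fin n → ℕ)
    (p : MvPolynomial (Fin n) K) :
    p ∈ Ideal.span ((fun i => (X i : MvPolynomial (Fin n) K) ^ e i) '' (↑σ : Set (Fin n))) ↔
      ∀ m ∈ p.support, ∃ i ∈ σ, e i ≤ m i := by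
  have himg : (fun i => (X i : MvPolynomial (Fin n) K) ^ e i) '' (↑σ : Set (Fin n)) =
      (fun s => monomial s (1 : K)) '' ((fun i => Finsupp.single i (e i)) '' (↑σ : Set (Fin n))) := by
    rw [Set.image_image]
    exact Set.image_congr fun i _ => X_pow_eq_monomial
  rw [himg, mem_ideal_span_monomial_image]
  refine forall₂_congr fun m _ => ?_
  constructor
  · rintro ⟨si, ⟨i, hi, rfl⟩, hle⟩
    exact ⟨i, hi, Finsupp.single_le_iff.mp hle⟩
  · rintro ⟨i, hi, hle⟩
    exact ⟨_, ⟨i, hi, rfl⟩, Finsupp.single_le_iff.mpr hle⟩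

theorem stmt5 (n : ℕ) (G : SimpleGraph (Fin n)) (hG : G.Connected)
    (K : Type*) [Field K] :
    acyclicIdeal n G K =
      ⨅ σ ∈ {σ : Finset (Fin n) | σ.Nonempty ∧ (G.induce (↑σ : Set (Fin n))).Connected},
        Ideal.span ((fun i => (X i : MvPolynomial (Fin n) K) ^
          ({j : Fin n | j ∈ σ ∧ G.Adj i j}.ncard + 1)) '' (↑σ : Set (Fin n))) := by
  ext p
  rw [mem_acyclic_iff]
  simp only [Ideal.mem_iInf, Set.mem_setOf_eq]
  constructor
  · intro h σ hσ
    rw [mem_irr_iff]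
    intro m hm
    obtain ⟨O, h1, h2, h3⟩ := h m hm
    exact (core G ⇑m).mp ⟨O, h1, h2, h3⟩ σ hσ.1 hσ.2
  · intro h m hm
    refine (core G ⇑m).mpr ?_
    intro σ h1 h2
    exact (mem_irr_iff σ _ p).mp (h σ ⟨h1, h2⟩) m hm
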